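/- (Lemma 2.6, local existence and uniqueness.) Let h, l : [0,∞) → [0,∞) be continuous and let f, g : ℝ → [0,∞) be locally Lipschitz continuous. Then for every u₀ ∈ C_b(ℝ^N) there exist T > 0 and a unique u ∈ C([0,T], C_b(ℝ^N)) such that u(t) = S(t)u₀ + ∫_0^t S(t−σ)[h(σ)f(u(σ)) + l(σ)g(u(σ))] dσ for all t ∈ [0,T]. -/

import Mathlib

open MeasureTheory Real Set Metric Filter

noncomputable section

/-- `ℝ^N`. -/
abbrev EucN (N : ℕ) := EuclideanSpace ℝ (Fin N)

/-- `C_b(ℝ^N)`, the bounded continuous functions with the sup norm. -/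
abbrev CbN (N : ℕ) := BoundedContinuousFunction (EucN N) ℝ

/-- `u ∈ C([0,T], C_b(ℝ^N))` satisfies the Duhamel (mild) formulation
`u(t) = S(t)u₀ + ∫_0^t S(t-σ)[h(σ) f(u(σ)) + l(σ) g(u(σ))] dσ` on `[0,T]`,
written pointwise via the kernel `Γ`. -/
def IsMildOnIcc (N : ℕ) (Γ : EucN N → EucN N → ℝ → ℝ)
    (h l f g : ℝ → ℝ) (u₀ : CbN N) (T : ℝ) (u : ℝ → CbN N) : Prop :=
  ContinuousOn u (Icc (0 : ℝ) T) ∧ u 0 = u₀ ∧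
    ∀ t ∈ Ioc (0 : ℝ) T, ∀ x,
      u t x = (∫ y, Γ x y t * u₀ y) +
        ∫ σ in (0 : ℝ)..t, ∫ y, Γ x y (t - σ) *
          (h σ * f (u σ y) + l σ * g (u σ y))

/-! ### Auxiliary lemmas -/

/-- A locally Lipschitz real function is Lipschitz on every compact set. -/
lemma locLip_lipschitzOnWith_of_isCompact {f : ℝ → ℝ} (hf : LocallyLipschitz f)
    {s : Set ℝ} (hs : IsCompact s) : ∃ K : ℝ, 0 ≤ K ∧
      ∀ x ∈ s, ∀ y ∈ s, dist (f x) (f y) ≤ K * dist x y := by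
  rcases s.eq_empty_or_nonempty with rfl | hne
  · exact ⟨0, le_refl _, by simp⟩
  have hdata : ∀ x : ℝ, ∃ ε : ℝ, 0 < ε ∧ ∃ K : NNReal,
      LipschitzOnWith K f (Metric.ball x ε) := by
    intro x
    obtain ⟨K, t, ht, hK⟩ := hf x
    obtain ⟨ε, hε, hb⟩ := Metric.mem_nhds_iff.1 ht
    exact ⟨ε, hε, K, hK.mono hb⟩
  choose ε hε K hK using hdata
  obtain ⟨T, hT⟩ := hs.elim_nhds_subcover' (fun x _ => Metric.ball x (ε x / 2))
    (fun x _ => Metric.ball_mem_nhds x (by have := hε x; linarith))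
  have hTne : T.Nonempty := by
    obtain ⟨x, hx⟩ := hne
    rcases Set.mem_iUnion₂.1 (hT hx) with ⟨i, hi, _⟩
    exact ⟨i, hi⟩
  obtain ⟨B, hB⟩ := hs.exists_bound_of_continuousOn hf.continuous.continuousOn
  have hB0 : 0 ≤ B := le_trans (norm_nonneg _) (hB _ hne.choose_spec)
  set δ : ℝ := T.inf' hTne fun i => ε i / 2 with hδdef
  have hδpos : 0 < δ := by
    rw [hδdef]
    apply (Finset.lt_inf'_iff hTne).2
    intro i _
    have := hε (i : ℝ); linarith
  set C₀ : ℝ := T.sup' hTne fun i => (K (i : ℝ) : ℝ) with hC₀def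
  have hC₀nn : 0 ≤ C₀ := by
    obtain ⟨i, hi⟩ := hTne
    exact le_trans (K (i : ℝ)).2 (Finset.le_sup' (f := fun i : s => (K (i : ℝ) : ℝ)) hi)
  refine ⟨max C₀ (2 * B / δ), le_trans hC₀nn (le_max_left _ _), ?_⟩
  intro x hx y hy
  rcases Set.mem_iUnion₂.1 (hT hx) with ⟨i, hiT, hxi⟩
  have hεi2 : δ ≤ ε (i : ℝ) / 2 := Finset.inf'_le _ hiT
  by_cases hd : dist x y < ε (i : ℝ) / 2
  · have hxball : x ∈ Metric.ball (i : ℝ) (ε (i : ℝ)) := by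
      have := Metric.mem_ball.1 hxi
      exact Metric.mem_ball.2 (by linarith)
    have hyball : y ∈ Metric.ball (i : ℝ) (ε (i : ℝ)) := by
      have h1 := Metric.mem_ball.1 hxi
      have h2 : dist y x < ε (i : ℝ) / 2 := by rwa [dist_comm] at hd
      exact Metric.mem_ball.2 (lt_of_le_of_lt (dist_triangle y x (i : ℝ)) (by linarith))
    have := (lipschitzOnWith_iff_dist_le_mul.1 (hK (i : ℝ))) x hxball y hyball
    calc dist (f x) (f y) ≤ (K (i : ℝ) : ℝ) * dist x y := this
      _ ≤ C₀ * dist x y := by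
          apply mul_le_mul_of_nonneg_right _ dist_nonneg
          exact Finset.le_sup' (f := fun i : s => (K (i : ℝ) : ℝ)) hiT
      _ ≤ max C₀ (2 * B / δ) * dist x y :=
          mul_le_mul_of_nonneg_right (le_max_left _ _) dist_nonneg
  · push_neg at hd
    have hδxy : δ ≤ dist x y := le_trans hεi2 hd
    have hBδ : 0 ≤ 2 * B / δ := by positivity
    calc dist (f x) (f y) ≤ ‖f x‖ + ‖f y‖ := by
          rw [dist_eq_norm]; exact norm_sub_le _ _
      _ ≤ 2 * B := by have := hB x hx; have := hB y hy; linarith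
      _ = (2 * B / δ) * δ := by field_simp
      _ ≤ (2 * B / δ) * dist x y := mul_le_mul_of_nonneg_left hδxy hBδ
      _ ≤ max C₀ (2 * B / δ) * dist x y :=
          mul_le_mul_of_nonneg_right (le_max_right _ _) dist_nonneg

/-- Gronwall: a continuous nonnegative function `e` with `e t ≤ C ∫₀ᵗ e` vanishes. -/
lemma gronwall_zero {e : ℝ → ℝ} (he : Continuous e) (hnn : ∀ t, 0 ≤ e t)
    {C T : ℝ}
    (hle : ∀ t ∈ Icc (0:ℝ) T, e t ≤ C * ∫ σ in (0:ℝ)..t, e σ) :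
    ∀ t ∈ Icc (0:ℝ) T, e t = 0 := by
  set E : ℝ → ℝ := fun t => ∫ σ in (0:ℝ)..t, e σ with hEdef
  have hEderiv : ∀ t : ℝ, HasDerivAt E (e t) t := fun t =>
    (he.integral_hasStrictDerivAt 0 t).hasDerivAt
  have hE0 : E 0 = 0 := intervalIntegral.integral_same
  have hEnn : ∀ t ∈ Icc (0:ℝ) T, 0 ≤ E t := fun t ht =>
    intervalIntegral.integral_nonneg ht.1 (fun σ _ => hnn σ)
  have key : ∀ t ∈ Icc (0:ℝ) T, ‖E t‖ ≤ gronwallBound 0 C 0 (t - 0) := by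
    apply norm_le_gronwallBound_of_norm_deriv_right_le
    · exact fun t _ => ((hEderiv t).continuousAt).continuousWithinAt
    · exact fun x _ => (hEderiv x).hasDerivWithinAt
    · simp [hE0]
    · intro x hx
      have hx' : x ∈ Icc (0:ℝ) T := ⟨hx.1, hx.2.le⟩
      rw [Real.norm_of_nonneg (hnn x), Real.norm_of_nonneg (hEnn x hx')]
      have := hle x hx'
      linarith
  intro t ht
  have hE : E t = 0 := by
    have h1 := key t ht
    rw [gronwallBound_ε0] at h1
    simp only [zero_mul] at h1
    have : ‖E t‖ = 0 := le_antisymm h1 (norm_nonneg _)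
    exact norm_eq_zero.1 this
  have h2 := hle t ht
  rw [show (∫ σ in (0:ℝ)..t, e σ) = E t from rfl, hE] at h2
  simp only [mul_zero] at h2
  exact le_antisymm h2 (hnn t)

section SMachinery

variable {N : ℕ}

lemma S_joint_cont (S : ℝ → CbN N → CbN N)
    (hSdist : ∀ t, 0 ≤ t → ∀ φ ψ : CbN N, dist (S t φ) (S t ψ) ≤ dist φ ψ)
    (hK4 : ∀ φ : CbN N, ContinuousOn (fun t => S t φ) (Ici (0:ℝ))) :
    ContinuousOn (fun p : ℝ × CbN N => S p.1 p.2) (Ici (0:ℝ) ×ˢ univ) := by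
  rw [Metric.continuousOn_iff]
  rintro ⟨t, φ⟩ hp ε hε
  obtain ⟨δ₁, hδ₁, hδ₁'⟩ := Metric.continuousOn_iff.1 (hK4 φ) t hp.1 (ε/2) (by linarith)
  refine ⟨min δ₁ (ε/2), by positivity, ?_⟩
  rintro ⟨s, ψ⟩ hq hdist
  have hle1 : dist s t ≤ dist ((s, ψ) : ℝ × CbN N) (t, φ) := by
    rw [Prod.dist_eq]; exact le_max_left _ _
  have hle2 : dist ψ φ ≤ dist ((s, ψ) : ℝ × CbN N) (t, φ) := by
    rw [Prod.dist_eq]; exact le_max_right _ _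
  have hds : dist s t < min δ₁ (ε/2) := lt_of_le_of_lt hle1 hdist
  have hdψ : dist ψ φ < min δ₁ (ε/2) := lt_of_le_of_lt hle2 hdist
  have h1 : dist (S s ψ) (S s φ) ≤ dist ψ φ := hSdist s hq.1 ψ φ
  have h2 : dist (S s φ) (S t φ) < ε/2 :=
    hδ₁' s hq.1 (lt_of_lt_of_le hds (min_le_left _ _))
  calc dist (S s ψ) (S t φ) ≤ dist (S s ψ) (S s φ) + dist (S s φ) (S t φ) :=
        dist_triangle _ _ _
    _ < ε/2 + ε/2 := by
        have := lt_of_lt_of_le hdψ (min_le_right _ _)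
        linarith
    _ = ε := by ring

lemma J_integrand_contOn (S : ℝ → CbN N → CbN N)
    (hSdist : ∀ t, 0 ≤ t → ∀ φ ψ : CbN N, dist (S t φ) (S t ψ) ≤ dist φ ψ)
    (hK4 : ∀ φ : CbN N, ContinuousOn (fun t => S t φ) (Ici (0:ℝ)))
    (P : ℝ → CbN N) (hP : Continuous P) (t : ℝ) {a b : ℝ} (ha : 0 ≤ a) (hb : 0 ≤ b) :
    IntervalIntegrable (fun σ => S σ (P (t - σ))) volume a b := by
  apply ContinuousOn.intervalIntegrable
  have hsub : uIcc a b ⊆ Ici (0:ℝ) := fun σ hσ =>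
    le_trans (le_min ha hb) hσ.1
  have hcomp : ContinuousOn ((fun p : ℝ × CbN N => S p.1 p.2) ∘
      (fun σ : ℝ => (σ, P (t - σ)))) (uIcc a b) := by
    apply (S_joint_cont S hSdist hK4).comp
    · exact (continuous_id.prodMk (hP.comp (continuous_const.sub continuous_id))).continuousOn
    · intro σ hσ
      exact ⟨hsub hσ, mem_univ _⟩
  exact hcomp

lemma J_contOn {T : ℝ} (hT : 0 ≤ T) (S : ℝ → CbN N → CbN N)
    (hSdist : ∀ t, 0 ≤ t → ∀ φ ψ : CbN N, dist (S t φ) (S t ψ) ≤ dist φ ψ)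
    (hSnorm : ∀ t, 0 ≤ t → ∀ ψ : CbN N, ‖S t ψ‖ ≤ ‖ψ‖)
    (hK4 : ∀ φ : CbN N, ContinuousOn (fun t => S t φ) (Ici (0:ℝ)))
    (P : ℝ → CbN N) (hP : Continuous P) :
    ContinuousOn (fun t => ∫ σ in (0:ℝ)..t, S σ (P (t - σ))) (Icc 0 T) := by
  obtain ⟨CP, hCP⟩ := (isCompact_Icc (a := -T) (b := T)).exists_bound_of_continuousOn
    hP.continuousOn
  have hCP0 : 0 ≤ CP := le_trans (norm_nonneg (P 0)) (hCP 0 ⟨by linarith, hT⟩)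
  have hUC : UniformContinuousOn P (Icc (-T) T) :=
    (isCompact_Icc).uniformContinuousOn_of_continuous hP.continuousOn
  rw [Metric.continuousOn_iff]
  intro t₀ ht₀ ε hε
  obtain ⟨δ, hδ, hδ'⟩ := Metric.uniformContinuousOn_iff.1 hUC (ε/(2*(T+1)))
    (by positivity)
  refine ⟨min δ (ε/(2*(CP+1))), by positivity, ?_⟩
  intro t ht hdist
  have hdt : dist t t₀ < δ := lt_of_lt_of_le hdist (min_le_left _ _)
  have hdt2 : dist t t₀ ≤ ε/(2*(CP+1)) := le_of_lt (lt_of_lt_of_le hdist (min_le_right _ _))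
  have hA1 : IntervalIntegrable (fun σ => S σ (P (t - σ))) volume 0 t₀ :=
    J_integrand_contOn S hSdist hK4 P hP t le_rfl ht₀.1
  have hA2 : IntervalIntegrable (fun σ => S σ (P (t - σ))) volume t₀ t :=
    J_integrand_contOn S hSdist hK4 P hP t ht₀.1 ht.1
  have hB1 : IntervalIntegrable (fun σ => S σ (P (t₀ - σ))) volume 0 t₀ :=
    J_integrand_contOn S hSdist hK4 P hP t₀ le_rfl ht₀.1
  have hsplit : (∫ σ in (0:ℝ)..t, S σ (P (t - σ)))
      = (∫ σ in (0:ℝ)..t₀, S σ (P (t - σ))) + ∫ σ in t₀..t, S σ (P (t - σ)) :=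
    (intervalIntegral.integral_add_adjacent_intervals hA1 hA2).symm
  rw [dist_eq_norm, hsplit]
  have heq : (∫ σ in (0:ℝ)..t₀, S σ (P (t - σ))) + (∫ σ in t₀..t, S σ (P (t - σ)))
      - (∫ σ in (0:ℝ)..t₀, S σ (P (t₀ - σ)))
      = (∫ σ in (0:ℝ)..t₀, (S σ (P (t - σ)) - S σ (P (t₀ - σ))))
        + ∫ σ in t₀..t, S σ (P (t - σ)) := by
    rw [intervalIntegral.integral_sub hA1 hB1]; abel
  rw [heq]
  have hb1 : ‖∫ σ in (0:ℝ)..t₀, (S σ (P (t - σ)) - S σ (P (t₀ - σ)))‖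
      ≤ (ε/(2*(T+1))) * |t₀ - 0| := by
    apply intervalIntegral.norm_integral_le_of_norm_le_const
    intro σ hσ
    have hσ' : σ ∈ Icc (0:ℝ) t₀ := by
      rw [uIoc_of_le ht₀.1] at hσ; exact ⟨hσ.1.le, hσ.2⟩
    have hσ0 : 0 ≤ σ := hσ'.1
    have hmem1 : t - σ ∈ Icc (-T) T := by
      constructor <;> [linarith [ht.1, ht.2, hσ'.2, ht₀.2]; linarith [ht.2, hσ0]]
    have hmem2 : t₀ - σ ∈ Icc (-T) T := by
      constructor <;> [linarith [ht₀.1, hσ'.2]; linarith [ht₀.2, hσ0]]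
    have hdd : dist (t - σ) (t₀ - σ) < δ := by
      rw [Real.dist_eq] at hdt ⊢
      simpa using hdt
    have := hδ' (t - σ) hmem1 (t₀ - σ) hmem2 hdd
    calc ‖S σ (P (t - σ)) - S σ (P (t₀ - σ))‖
        = dist (S σ (P (t - σ))) (S σ (P (t₀ - σ))) := (dist_eq_norm _ _).symm
      _ ≤ dist (P (t - σ)) (P (t₀ - σ)) := hSdist σ hσ0 _ _
      _ ≤ ε/(2*(T+1)) := this.le
  have hb2 : ‖∫ σ in t₀..t, S σ (P (t - σ))‖ ≤ CP * |t - t₀| := by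
    apply intervalIntegral.norm_integral_le_of_norm_le_const
    intro σ hσ
    have hσ' : σ ∈ Icc (min t₀ t) (max t₀ t) := ⟨le_of_lt (hσ.1), hσ.2⟩
    have hσ0 : 0 ≤ σ := le_trans (le_min ht₀.1 ht.1) hσ'.1
    have hσT : σ ≤ T := le_trans hσ'.2 (max_le ht₀.2 ht.2)
    have hmem : t - σ ∈ Icc (-T) T := by
      constructor <;> [linarith [ht.1]; linarith [ht.2]]
    calc ‖S σ (P (t - σ))‖ ≤ ‖P (t - σ)‖ := hSnorm σ hσ0 _
      _ ≤ CP := hCP _ hmem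
  calc ‖(∫ σ in (0:ℝ)..t₀, (S σ (P (t - σ)) - S σ (P (t₀ - σ))))
        + ∫ σ in t₀..t, S σ (P (t - σ))‖
      ≤ (ε/(2*(T+1))) * |t₀ - 0| + CP * |t - t₀| := norm_add_le_of_le hb1 hb2
    _ < ε := by
        have h1 : |t₀ - 0| ≤ T := by
          rw [sub_zero, abs_of_nonneg ht₀.1]; exact ht₀.2
        have h2 : |t - t₀| ≤ ε/(2*(CP+1)) := by
          rw [← Real.dist_eq]; exact hdt2
        have e1 : (ε/(2*(T+1))) * |t₀ - 0| ≤ (ε/(2*(T+1))) * T :=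
          mul_le_mul_of_nonneg_left h1 (by positivity)
        have e2 : CP * |t - t₀| ≤ CP * (ε/(2*(CP+1))) :=
          mul_le_mul_of_nonneg_left h2 hCP0
        have e3 : (ε/(2*(T+1))) * T < ε/2 := by
          rw [div_mul_eq_mul_div, div_lt_div_iff₀ (by positivity) (by norm_num)]
          nlinarith
        have e4 : CP * (ε/(2*(CP+1))) < ε/2 := by
          rw [mul_div_assoc', div_lt_div_iff₀ (by positivity) (by norm_num)]
          nlinarith
        linarith

lemma J_eval (S : ℝ → CbN N → CbN N)
    (hSdist : ∀ t, 0 ≤ t → ∀ φ ψ : CbN N, dist (S t φ) (S t ψ) ≤ dist φ ψ)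
    (hK4 : ∀ φ : CbN N, ContinuousOn (fun t => S t φ) (Ici (0:ℝ)))
    (P : ℝ → CbN N) (hP : Continuous P) {t : ℝ} (ht : 0 ≤ t) (x : EucN N) :
    (∫ σ in (0:ℝ)..t, S σ (P (t - σ))) x
      = ∫ σ in (0:ℝ)..t, (S (t - σ) (P σ)) x := by
  have hint := J_integrand_contOn S hSdist hK4 P hP t le_rfl ht
  have h1 := ContinuousLinearMap.intervalIntegral_comp_comm
    (BoundedContinuousFunction.evalCLM (α := EucN N) (β := ℝ) ℝ x) hint
  have h2 : (∫ σ in (0:ℝ)..t, (S σ (P (t - σ))) x)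
      = ∫ σ in (0:ℝ)..t, (S (t - σ) (P σ)) x := by
    have h3 := intervalIntegral.integral_comp_sub_left (a := 0) (b := t)
      (fun σ => (S σ (P (t - σ))) x) t
    simp only [sub_self, sub_zero] at h3
    rw [← h3]
    apply intervalIntegral.integral_congr
    intro σ _
    simp only [sub_sub_cancel]
  rw [← h2]
  exact h1.symm

end SMachinery

/-- Truncation at level `|m|`. -/
def truncR (m s : ℝ) : ℝ := max (min s |m|) (-|m|)

lemma truncR_mem (m s : ℝ) : truncR m s ∈ Icc (-|m|) (|m|) :=
  ⟨le_max_right _ _, max_le (min_le_right _ _) (by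
    have := abs_nonneg m; linarith)⟩

lemma truncR_lip (m a b : ℝ) : |truncR m a - truncR m b| ≤ |a - b| := by
  calc |truncR m a - truncR m b| ≤ abs (min a (abs m) - min b (abs m)) :=
        abs_max_sub_max_le_abs _ _ _
    _ ≤ max (abs (a - b)) (abs (abs m - abs m)) := abs_min_sub_min_le_max _ _ _ _
    _ = |a - b| := by simp

lemma truncR_eq (m s : ℝ) (h : |s| ≤ m) : truncR m s = s := by
  have h0 : 0 ≤ m := le_trans (abs_nonneg s) h
  have hm : |m| = m := abs_of_nonneg h0
  have h1 := abs_le.1 h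
  unfold truncR
  rw [hm, min_eq_left h1.2, max_eq_left h1.1]

/-- Superposition operator on bounded continuous functions. -/
lemma exists_superposition {N : ℕ} (F : ℝ → ℝ) (K B : ℝ) (hK0 : 0 ≤ K)
    (hF : ∀ a b, |F a - F b| ≤ K * |a - b|) (hB : ∀ s, |F s| ≤ B) :
    ∃ Φ : CbN N → CbN N, (∀ w y, Φ w y = F (w y)) ∧
      (∀ w v, ‖Φ w - Φ v‖ ≤ K * ‖w - v‖) ∧ (∀ w, ‖Φ w‖ ≤ B) := by
  have hlip : LipschitzWith K.toNNReal F := by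
    apply LipschitzWith.of_dist_le_mul
    intro a b
    rw [Real.coe_toNNReal _ hK0, Real.dist_eq, Real.dist_eq]
    exact hF a b
  have hB0 : 0 ≤ B := le_trans (abs_nonneg _) (hB 0)
  refine ⟨fun w => BoundedContinuousFunction.comp F hlip w, fun w y => rfl, ?_, ?_⟩
  · intro w v
    have hKnn : 0 ≤ K * ‖w - v‖ := mul_nonneg hK0 (norm_nonneg _)
    rw [BoundedContinuousFunction.norm_le hKnn]
    intro y
    have h1 : ‖(w - v) y‖ ≤ ‖w - v‖ := BoundedContinuousFunction.norm_coe_le_norm _ y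
    have h2 : (BoundedContinuousFunction.comp F hlip w - BoundedContinuousFunction.comp F hlip v) y
        = F (w y) - F (v y) := by
      rw [BoundedContinuousFunction.sub_apply]; rfl
    rw [h2, Real.norm_eq_abs]
    calc |F (w y) - F (v y)| ≤ K * |w y - v y| := hF _ _
      _ ≤ K * ‖w - v‖ := by
          apply mul_le_mul_of_nonneg_left _ hK0
          simpa [Real.norm_eq_abs] using h1
  · intro w
    rw [BoundedContinuousFunction.norm_le hB0]
    intro y
    simpa [Real.norm_eq_abs, BoundedContinuousFunction.comp] using hB (w y)

set_option maxHeartbeats 2000000 in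
/-- Lemma 2.6: local existence and uniqueness of mild solutions. -/
theorem local_existence_uniqueness
    (N : ℕ) (hN : 1 ≤ N) (α : ℝ) (hα0 : 0 ≤ α) (hα1 : α < 1)
    (Γ : EucN N → EucN N → ℝ → ℝ)
    (hΓmeas : Measurable fun p : EucN N × EucN N × ℝ => Γ p.1 p.2.1 p.2.2)
    (c₀ : ℝ) (hc₀ : 0 < c₀)
    (hK1y : ∀ (x : EucN N) (t : ℝ), 0 < t → ∫ y, Γ x y t = 1)
    (hK1x : ∀ (y : EucN N) (t : ℝ), 0 < t → ∫ x, Γ x y t = 1)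
    (hK2 : ∀ (x y : EucN N) (s t : ℝ), 0 < s → s < t →
      Γ x y t = ∫ ξ, Γ x ξ (t - s) * Γ ξ y s)
    (hK5 : ∀ (x y : EucN N) (t : ℝ), 0 < t →
      0 < Γ x y t ∧ Γ x y t ≤ c₀ * t ^ (-(N : ℝ) / (2 - α)))
    (S : ℝ → CbN N → CbN N)
    (hS0 : ∀ φ, S 0 φ = φ)
    (hSΓ : ∀ (φ : CbN N) (t : ℝ), 0 < t → ∀ x, S t φ x = ∫ y, Γ x y t * φ y)
    (hK4 : ∀ φ : CbN N, ContinuousOn (fun t => S t φ) (Ici (0 : ℝ)))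
    (h l : ℝ → ℝ)
    (hhcont : ContinuousOn h (Ici 0)) (hlcont : ContinuousOn l (Ici 0))
    (hhnn : ∀ t, 0 ≤ t → 0 ≤ h t) (hlnn : ∀ t, 0 ≤ t → 0 ≤ l t)
    (f g : ℝ → ℝ)
    (hfLip : LocallyLipschitz f) (hgLip : LocallyLipschitz g)
    (hfnn : ∀ s : ℝ, 0 ≤ f s) (hgnn : ∀ s : ℝ, 0 ≤ g s) :
    ∀ u₀ : CbN N, ∃ T : ℝ, 0 < T ∧ ∃ u : ℝ → CbN N,
      IsMildOnIcc N Γ h l f g u₀ T u ∧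
      ∀ v : ℝ → CbN N, IsMildOnIcc N Γ h l f g u₀ T v →
        ∀ t ∈ Icc (0 : ℝ) T, v t = u t := by
  intro u₀
  -- ## Γ basics
  have hΓymeas : ∀ (x : EucN N) (t : ℝ), AEStronglyMeasurable (fun y => Γ x y t) volume := by
    intro x t
    exact (hΓmeas.comp ((measurable_const (a := x)).prodMk
      (measurable_id.prodMk measurable_const))).aestronglyMeasurable
  have hΓint : ∀ (x : EucN N) (t : ℝ), 0 < t → Integrable (fun y => Γ x y t) := by
    intro x t ht
    by_contra hni
    have h0 := integral_undef hni
    rw [hK1y x t ht] at h0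
    exact one_ne_zero h0
  have hΓnn : ∀ (x y : EucN N) (t : ℝ), 0 < t → 0 ≤ Γ x y t :=
    fun x y t ht => (hK5 x y t ht).1.le
  have hmulint : ∀ (x : EucN N) (t : ℝ), 0 < t → ∀ (c : EucN N → ℝ),
      AEStronglyMeasurable c volume → ∀ B : ℝ, (∀ y, ‖c y‖ ≤ B) →
      Integrable (fun y => Γ x y t * c y) := by
    intro x t ht c hc B hB
    have := (hΓint x t ht).bdd_mul hc (Filter.Eventually.of_forall hB)
    simpa [mul_comm] using this
  have hkey : ∀ (x : EucN N) (t : ℝ), 0 < t → ∀ (c : EucN N → ℝ),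
      AEStronglyMeasurable c volume → ∀ B : ℝ, (∀ y, ‖c y‖ ≤ B) →
      |∫ y, Γ x y t * c y| ≤ B := by
    intro x t ht c hc B hB
    have hcalc : |∫ y, Γ x y t * c y| ≤ ∫ y, ‖Γ x y t * c y‖ := by
      simpa [Real.norm_eq_abs] using norm_integral_le_integral_norm (fun y => Γ x y t * c y)
    have h2 : (∫ y, ‖Γ x y t * c y‖) ≤ ∫ y, Γ x y t * B := by
      apply integral_mono (hmulint x t ht c hc B hB).norm ((hΓint x t ht).mul_const B)
      intro y
      show ‖Γ x y t * c y‖ ≤ Γ x y t * B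
      rw [Real.norm_eq_abs, abs_mul, abs_of_nonneg (hΓnn x y t ht)]
      exact mul_le_mul_of_nonneg_left (by simpa [Real.norm_eq_abs] using hB y) (hΓnn x y t ht)
    have h3 : (∫ y, Γ x y t * B) = B := by
      rw [integral_mul_const, hK1y x t ht, one_mul]
    linarith
  -- ## S basics
  have hSsub : ∀ t : ℝ, 0 < t → ∀ φ ψ : CbN N, ∀ x,
      S t φ x - S t ψ x = ∫ y, Γ x y t * (φ y - ψ y) := by
    intro t ht φ ψ x
    rw [hSΓ φ t ht x, hSΓ ψ t ht x, ← integral_sub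
      (hmulint x t ht φ (φ.continuous.measurable.aestronglyMeasurable) ‖φ‖
        (fun y => φ.norm_coe_le_norm y))
      (hmulint x t ht ψ (ψ.continuous.measurable.aestronglyMeasurable) ‖ψ‖
        (fun y => ψ.norm_coe_le_norm y))]
    congr 1
    funext y
    ring
  have hSnormle : ∀ t : ℝ, 0 ≤ t → ∀ φ ψ : CbN N, ‖S t φ - S t ψ‖ ≤ ‖φ - ψ‖ := by
    intro t ht φ ψ
    rcases eq_or_lt_of_le ht with rfl | ht
    · rw [hS0, hS0]
    · rw [BoundedContinuousFunction.norm_le (norm_nonneg _)]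
      intro x
      rw [BoundedContinuousFunction.sub_apply, Real.norm_eq_abs, hSsub t ht φ ψ x]
      apply hkey x t ht _ ((φ.continuous.sub ψ.continuous).measurable.aestronglyMeasurable)
      intro y
      have := (φ - ψ).norm_coe_le_norm y
      simpa [BoundedContinuousFunction.sub_apply] using this
  have hSdist : ∀ t : ℝ, 0 ≤ t → ∀ φ ψ : CbN N, dist (S t φ) (S t ψ) ≤ dist φ ψ := by
    intro t ht φ ψ
    rw [dist_eq_norm, dist_eq_norm]
    exact hSnormle t ht φ ψ
  have hSzero : ∀ t : ℝ, 0 ≤ t → S t 0 = 0 := by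
    intro t ht
    rcases eq_or_lt_of_le ht with rfl | ht
    · exact hS0 0
    · ext x
      rw [hSΓ 0 t ht x]
      simp
  have hSnorm : ∀ t : ℝ, 0 ≤ t → ∀ ψ : CbN N, ‖S t ψ‖ ≤ ‖ψ‖ := by
    intro t ht ψ
    have := hSnormle t ht ψ 0
    rwa [hSzero t ht, sub_zero, sub_zero] at this
  -- ## constants and truncated nonlinearities
  set M : ℝ := ‖u₀‖ + 1 with hMdef
  have hM1 : 1 ≤ M := by have := norm_nonneg u₀; simp only [hMdef]; linarith
  have hM0 : 0 < M := lt_of_lt_of_le one_pos hM1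
  have hKfex : ∀ m : ℝ, ∃ K : ℝ, 0 ≤ K ∧ ∀ x ∈ Icc (-(|m|)) (|m|), ∀ y ∈ Icc (-(|m|)) (|m|),
      dist (f x) (f y) ≤ K * dist x y :=
    fun m => locLip_lipschitzOnWith_of_isCompact hfLip isCompact_Icc
  choose Kf hKf0 hKf using hKfex
  have hKgex : ∀ m : ℝ, ∃ K : ℝ, 0 ≤ K ∧ ∀ x ∈ Icc (-(|m|)) (|m|), ∀ y ∈ Icc (-(|m|)) (|m|),
      dist (g x) (g y) ≤ K * dist x y :=
    fun m => locLip_lipschitzOnWith_of_isCompact hgLip isCompact_Icc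
  choose Kg hKg0 hKg using hKgex
  set Bf : ℝ → ℝ := fun m => |f 0| + Kf m * |m| with hBfdef
  set Bg : ℝ → ℝ := fun m => |g 0| + Kg m * |m| with hBgdef
  have hBf0 : ∀ m, 0 ≤ Bf m := by
    intro m; simp only [hBfdef]
    have := abs_nonneg (f 0); have := mul_nonneg (hKf0 m) (abs_nonneg m); linarith
  have hBg0 : ∀ m, 0 ≤ Bg m := by
    intro m; simp only [hBgdef]
    have := abs_nonneg (g 0); have := mul_nonneg (hKg0 m) (abs_nonneg m); linarith
  have hNfex : ∀ m : ℝ, ∃ Φ : CbN N → CbN N, (∀ w y, Φ w y = f (truncR m (w y))) ∧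
      (∀ w v, ‖Φ w - Φ v‖ ≤ Kf m * ‖w - v‖) ∧ (∀ w, ‖Φ w‖ ≤ Bf m) := by
    intro m
    refine exists_superposition (N := N) (fun s => f (truncR m s)) (Kf m) (Bf m) (hKf0 m) ?_ ?_
    · intro a b
      have h1 := hKf m (truncR m a) (truncR_mem m a) (truncR m b) (truncR_mem m b)
      rw [Real.dist_eq, Real.dist_eq] at h1
      calc |f (truncR m a) - f (truncR m b)| ≤ Kf m * |truncR m a - truncR m b| := h1
        _ ≤ Kf m * |a - b| := mul_le_mul_of_nonneg_left (truncR_lip m a b) (hKf0 m)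
    · intro s
      have h0mem : (0:ℝ) ∈ Icc (-(|m|)) (|m|) := by
        constructor <;> [simp [abs_nonneg]; simp [abs_nonneg]]
      have h1 := hKf m (truncR m s) (truncR_mem m s) 0 h0mem
      rw [Real.dist_eq, Real.dist_eq, sub_zero] at h1
      have h2 : |truncR m s| ≤ |m| := abs_le.2 ⟨(truncR_mem m s).1, (truncR_mem m s).2⟩
      have h3 : |f (truncR m s)| ≤ |f (truncR m s) - f 0| + |f 0| := by
        have := abs_sub_abs_le_abs_sub (f (truncR m s)) (f 0)
        have := abs_add_le (f (truncR m s) - f 0) (f 0)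
        calc |f (truncR m s)| = |f (truncR m s) - f 0 + f 0| := by ring_nf
          _ ≤ |f (truncR m s) - f 0| + |f 0| := abs_add_le _ _
      simp only [hBfdef]
      have h4 : Kf m * |truncR m s| ≤ Kf m * |m| := mul_le_mul_of_nonneg_left h2 (hKf0 m)
      linarith
  choose Nf hNf_apply hNf_dist hNf_norm using hNfex
  have hNgex : ∀ m : ℝ, ∃ Φ : CbN N → CbN N, (∀ w y, Φ w y = g (truncR m (w y))) ∧
      (∀ w v, ‖Φ w - Φ v‖ ≤ Kg m * ‖w - v‖) ∧ (∀ w, ‖Φ w‖ ≤ Bg m) := by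
    intro m
    refine exists_superposition (N := N) (fun s => g (truncR m s)) (Kg m) (Bg m) (hKg0 m) ?_ ?_
    · intro a b
      have h1 := hKg m (truncR m a) (truncR_mem m a) (truncR m b) (truncR_mem m b)
      rw [Real.dist_eq, Real.dist_eq] at h1
      calc |g (truncR m a) - g (truncR m b)| ≤ Kg m * |truncR m a - truncR m b| := h1
        _ ≤ Kg m * |a - b| := mul_le_mul_of_nonneg_left (truncR_lip m a b) (hKg0 m)
    · intro s
      have h0mem : (0:ℝ) ∈ Icc (-(|m|)) (|m|) := by
        constructor <;> [simp [abs_nonneg]; simp [abs_nonneg]]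
      have h1 := hKg m (truncR m s) (truncR_mem m s) 0 h0mem
      rw [Real.dist_eq, Real.dist_eq, sub_zero] at h1
      have h2 : |truncR m s| ≤ |m| := abs_le.2 ⟨(truncR_mem m s).1, (truncR_mem m s).2⟩
      have h3 : |g (truncR m s)| ≤ |g (truncR m s) - g 0| + |g 0| := by
        calc |g (truncR m s)| = |g (truncR m s) - g 0 + g 0| := by ring_nf
          _ ≤ |g (truncR m s) - g 0| + |g 0| := abs_add_le _ _
      simp only [hBgdef]
      have h4 : Kg m * |truncR m s| ≤ Kg m * |m| := mul_le_mul_of_nonneg_left h2 (hKg0 m)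
      linarith
  choose Ng hNg_apply hNg_dist hNg_norm using hNgex
  have hNfcont : ∀ m, Continuous (Nf m) := by
    intro m
    apply (LipschitzWith.of_dist_le_mul (K := (Kf m).toNNReal) ?_).continuous
    intro a b
    rw [Real.coe_toNNReal _ (hKf0 m), dist_eq_norm, dist_eq_norm]
    exact hNf_dist m a b
  have hNgcont : ∀ m, Continuous (Ng m) := by
    intro m
    apply (LipschitzWith.of_dist_le_mul (K := (Kg m).toNNReal) ?_).continuous
    intro a b
    rw [Real.coe_toNNReal _ (hKg0 m), dist_eq_norm, dist_eq_norm]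
    exact hNg_dist m a b
  -- bounds on h, l on [0,1]
  obtain ⟨Ch', hCh'⟩ := (isCompact_Icc (a := (0:ℝ)) (b := 1)).exists_bound_of_continuousOn
    (hhcont.mono (fun x hx => hx.1))
  obtain ⟨Cl', hCl'⟩ := (isCompact_Icc (a := (0:ℝ)) (b := 1)).exists_bound_of_continuousOn
    (hlcont.mono (fun x hx => hx.1))
  set Ch : ℝ := max Ch' 0 with hChdef
  set Cl : ℝ := max Cl' 0 with hCldef
  have hCh0 : 0 ≤ Ch := le_max_right _ _
  have hCl0 : 0 ≤ Cl := le_max_right _ _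
  have hCh : ∀ σ ∈ Icc (0:ℝ) 1, |h σ| ≤ Ch := by
    intro σ hσ
    exact le_trans (by simpa [Real.norm_eq_abs] using hCh' σ hσ) (le_max_left _ _)
  have hCl : ∀ σ ∈ Icc (0:ℝ) 1, |l σ| ≤ Cl := by
    intro σ hσ
    exact le_trans (by simpa [Real.norm_eq_abs] using hCl' σ hσ) (le_max_left _ _)
  -- time horizon
  set C1 : ℝ := Ch * Kf M + Cl * Kg M with hC1def
  set C2 : ℝ := Ch * Bf M + Cl * Bg M with hC2def
  have hC1nn : 0 ≤ C1 := by
    simp only [hC1def]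
    have := mul_nonneg hCh0 (hKf0 M); have := mul_nonneg hCl0 (hKg0 M); linarith
  have hC2nn : 0 ≤ C2 := by
    simp only [hC2def]
    have := mul_nonneg hCh0 (hBf0 M); have := mul_nonneg hCl0 (hBg0 M); linarith
  set T : ℝ := min 1 (min (1/(2*(C1+1))) (1/(C2+1))) with hTdef
  have hT0 : 0 < T := by
    rw [hTdef]
    apply lt_min one_pos
    apply lt_min <;> positivity
  have hT1 : T ≤ 1 := min_le_left _ _
  have hTC1 : T * C1 ≤ 1/2 := by
    have h1 : T ≤ 1/(2*(C1+1)) := le_trans (min_le_right _ _) (min_le_left _ _)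
    have h2 : T * (2*(C1+1)) ≤ 1 := by
      rw [← le_div_iff₀ (by positivity)]
      exact h1
    nlinarith [hT0.le]
  have hTC2 : T * C2 ≤ 1 := by
    have h1 : T ≤ 1/(C2+1) := le_trans (min_le_right _ _) (min_le_right _ _)
    have h2 : T * (C2+1) ≤ 1 := by
      rw [← le_div_iff₀ (by positivity)]
      exact h1
    nlinarith [hT0.le]
  -- ## extended coefficients and the nonlinear term
  set H : ℝ → ℝ := fun σ => h (max σ 0) with hHdef
  set L : ℝ → ℝ := fun σ => l (max σ 0) with hLdef
  have hHcont : Continuous H :=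
    hhcont.comp_continuous (continuous_id.max continuous_const) (fun x => mem_Ici.2 (le_max_right _ _))
  have hLcont : Continuous L :=
    hlcont.comp_continuous (continuous_id.max continuous_const) (fun x => mem_Ici.2 (le_max_right _ _))
  have hHeq : ∀ σ : ℝ, 0 ≤ σ → H σ = h σ := by
    intro σ hσ; simp only [hHdef]; rw [max_eq_left hσ]
  have hLeq : ∀ σ : ℝ, 0 ≤ σ → L σ = l σ := by
    intro σ hσ; simp only [hLdef]; rw [max_eq_left hσ]
  have hHbd : ∀ σ : ℝ, σ ≤ 1 → |H σ| ≤ Ch := by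
    intro σ hσ
    exact hCh _ ⟨le_max_right _ _, max_le hσ (by norm_num)⟩
  have hLbd : ∀ σ : ℝ, σ ≤ 1 → |L σ| ≤ Cl := by
    intro σ hσ
    exact hCl _ ⟨le_max_right _ _, max_le hσ (by norm_num)⟩
  have hnsmul : ∀ (a : ℝ) (x : CbN N), ‖a • x‖ = |a| * ‖x‖ := fun a x => by
    rw [show ‖a • x‖ = ‖a‖ * ‖x‖ from norm_smul a x, Real.norm_eq_abs]
  set Gm : ℝ → (ℝ → CbN N) → ℝ → CbN N :=
    fun m w σ => H σ • Nf m (w σ) + L σ • Ng m (w σ) with hGmdef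
  have hGmcont : ∀ m (w : ℝ → CbN N), Continuous w → Continuous (Gm m w) := by
    intro m w hw
    simp only [hGmdef]
    exact (hHcont.smul ((hNfcont m).comp hw)).add (hLcont.smul ((hNgcont m).comp hw))
  have hGmbd : ∀ m (w : ℝ → CbN N) (σ : ℝ), σ ≤ 1 →
      ‖Gm m w σ‖ ≤ Ch * Bf m + Cl * Bg m := by
    intro m w σ hσ
    simp only [hGmdef]
    apply norm_add_le_of_le
    · rw [hnsmul]
      exact mul_le_mul (hHbd σ hσ) (hNf_norm m _) (norm_nonneg _) hCh0
    · rw [hnsmul]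
      exact mul_le_mul (hLbd σ hσ) (hNg_norm m _) (norm_nonneg _) hCl0
  have hGmdiff : ∀ m (w v : ℝ → CbN N) (σ : ℝ), σ ≤ 1 →
      ‖Gm m w σ - Gm m v σ‖ ≤ (Ch * Kf m + Cl * Kg m) * ‖w σ - v σ‖ := by
    intro m w v σ hσ
    simp only [hGmdef]
    have heq : H σ • Nf m (w σ) + L σ • Ng m (w σ) - (H σ • Nf m (v σ) + L σ • Ng m (v σ))
        = H σ • (Nf m (w σ) - Nf m (v σ)) + L σ • (Ng m (w σ) - Ng m (v σ)) := by
      rw [smul_sub, smul_sub]; abel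
    rw [heq]
    have hb1 : ‖H σ • (Nf m (w σ) - Nf m (v σ))‖ ≤ Ch * (Kf m * ‖w σ - v σ‖) := by
      rw [hnsmul]
      exact mul_le_mul (hHbd σ hσ) (hNf_dist m _ _) (norm_nonneg _) hCh0
    have hb2 : ‖L σ • (Ng m (w σ) - Ng m (v σ))‖ ≤ Cl * (Kg m * ‖w σ - v σ‖) := by
      rw [hnsmul]
      exact mul_le_mul (hLbd σ hσ) (hNg_dist m _ _) (norm_nonneg _) hCl0
    calc ‖H σ • (Nf m (w σ) - Nf m (v σ)) + L σ • (Ng m (w σ) - Ng m (v σ))‖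
        ≤ Ch * (Kf m * ‖w σ - v σ‖) + Cl * (Kg m * ‖w σ - v σ‖) :=
          norm_add_le_of_le hb1 hb2
      _ = (Ch * Kf m + Cl * Kg m) * ‖w σ - v σ‖ := by ring
  -- ## the Picard space and map
  set X := C(Icc (0:ℝ) T, CbN N) with hXdef
  haveI : Nonempty X := ⟨ContinuousMap.const _ u₀⟩
  set ext : X → ℝ → CbN N := fun u σ => u (projIcc 0 T hT0.le σ) with hextdef
  have hextcont : ∀ u : X, Continuous (ext u) := fun u =>
    u.continuous.comp continuous_projIcc
  have hextmem : ∀ (u : X) (σ : ℝ) (hσ : σ ∈ Icc (0:ℝ) T), ext u σ = u ⟨σ, hσ⟩ := by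
    intro u σ hσ
    simp only [hextdef, projIcc_of_mem hT0.le hσ]
  have hΦexcont : ∀ u : X, ContinuousOn
      (fun t : ℝ => S t u₀ + ∫ σ in (0:ℝ)..t, S σ (Gm M (ext u) (t - σ))) (Icc 0 T) :=
    fun u => ((hK4 u₀).mono (fun s hs => hs.1)).add
      (J_contOn hT0.le S hSdist hSnorm hK4 _ (hGmcont M _ (hextcont u)))
  set Φ : X → X := fun u =>
    ⟨fun t => S ↑t u₀ + ∫ σ in (0:ℝ)..(t:ℝ), S σ (Gm M (ext u) ((t:ℝ) - σ)),
      (hΦexcont u).comp_continuous continuous_subtype_val (fun x => x.2)⟩ with hΦdef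
  have hΦapp : ∀ (u : X) (t : Icc (0:ℝ) T),
      Φ u t = S ↑t u₀ + ∫ σ in (0:ℝ)..(t:ℝ), S σ (Gm M (ext u) ((t:ℝ) - σ)) := by
    intro u t
    simp only [hΦdef, ContinuousMap.coe_mk]
    rfl
  -- contraction estimate
  have hΦdist : ∀ u v : X, dist (Φ u) (Φ v) ≤ (1/2 : ℝ) * dist u v := by
    intro u v
    have hd0 : (0:ℝ) ≤ (1/2) * dist u v := by positivity
    rw [ContinuousMap.dist_le hd0]
    intro t
    rw [hΦapp u t, hΦapp v t, dist_eq_norm]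
    have ht0 : (0:ℝ) ≤ ↑t := t.2.1
    have htT : (t:ℝ) ≤ T := t.2.2
    have hint1 := J_integrand_contOn S hSdist hK4 (Gm M (ext u))
      (hGmcont M _ (hextcont u)) ↑t le_rfl ht0
    have hint2 := J_integrand_contOn S hSdist hK4 (Gm M (ext v))
      (hGmcont M _ (hextcont v)) ↑t le_rfl ht0
    have hcancel : ∀ (a b c : CbN N), (c + a) - (c + b) = a - b := fun a b c => by abel
    rw [hcancel, ← intervalIntegral.integral_sub hint1 hint2]
    have hbd : ∀ σ ∈ uIoc (0:ℝ) (t:ℝ),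
        ‖S σ (Gm M (ext u) ((t:ℝ) - σ)) - S σ (Gm M (ext v) ((t:ℝ) - σ))‖
          ≤ C1 * dist u v := by
      intro σ hσ
      rw [uIoc_of_le ht0] at hσ
      have hσ0 : 0 ≤ σ := hσ.1.le
      have hτ1 : (t:ℝ) - σ ≤ 1 := by linarith [hσ.1, htT, hT1]
      have h1 : ‖S σ (Gm M (ext u) ((t:ℝ) - σ)) - S σ (Gm M (ext v) ((t:ℝ) - σ))‖
          ≤ ‖Gm M (ext u) ((t:ℝ) - σ) - Gm M (ext v) ((t:ℝ) - σ)‖ := by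
        rw [← dist_eq_norm, ← dist_eq_norm]
        exact hSdist σ hσ0 _ _
      have h2 := hGmdiff M (ext u) (ext v) ((t:ℝ) - σ) hτ1
      have h3 : ‖ext u ((t:ℝ) - σ) - ext v ((t:ℝ) - σ)‖ ≤ dist u v := by
        rw [← dist_eq_norm]
        simp only [hextdef]
        exact ContinuousMap.dist_apply_le_dist _
      calc ‖S σ (Gm M (ext u) ((t:ℝ) - σ)) - S σ (Gm M (ext v) ((t:ℝ) - σ))‖
          ≤ ‖Gm M (ext u) ((t:ℝ) - σ) - Gm M (ext v) ((t:ℝ) - σ)‖ := h1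
        _ ≤ C1 * ‖ext u ((t:ℝ) - σ) - ext v ((t:ℝ) - σ)‖ := h2
        _ ≤ C1 * dist u v := mul_le_mul_of_nonneg_left h3 hC1nn
    calc ‖∫ σ in (0:ℝ)..(t:ℝ), (S σ (Gm M (ext u) ((t:ℝ) - σ))
          - S σ (Gm M (ext v) ((t:ℝ) - σ)))‖
        ≤ C1 * dist u v * |(t:ℝ) - 0| :=
          intervalIntegral.norm_integral_le_of_norm_le_const hbd
      _ ≤ (1/2 : ℝ) * dist u v := by
          rw [sub_zero, abs_of_nonneg ht0]
          have hd := dist_nonneg (x := u) (y := v)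
          have e1 : C1 * dist u v * (t:ℝ) ≤ C1 * dist u v * T :=
            mul_le_mul_of_nonneg_left htT (mul_nonneg hC1nn hd)
          have e2 : T * C1 * dist u v ≤ 1/2 * dist u v :=
            mul_le_mul_of_nonneg_right hTC1 hd
          nlinarith [e1, e2]
  have hΦcontr : ContractingWith (1/2 : NNReal) Φ := by
    refine ⟨by rw [← NNReal.coe_lt_coe]; norm_num, ?_⟩
    apply LipschitzWith.of_dist_le_mul
    intro u v
    have := hΦdist u v
    rw [show ((1/2 : NNReal) : ℝ) = (1/2 : ℝ) by norm_num]
    exact this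
  set w : X := ContractingWith.fixedPoint Φ hΦcontr with hwdef
  have hwfix : Φ w = w := hΦcontr.fixedPoint_isFixedPt
  have hwEq : ∀ t : Icc (0:ℝ) T,
      w t = S ↑t u₀ + ∫ σ in (0:ℝ)..(t:ℝ), S σ (Gm M (ext w) ((t:ℝ) - σ)) := by
    intro t
    conv_lhs => rw [← hwfix]
    exact hΦapp w t
  -- a priori bound
  have hwbd : ∀ t : Icc (0:ℝ) T, ‖w t‖ ≤ M := by
    intro t
    rw [hwEq t]
    have ht0 : (0:ℝ) ≤ ↑t := t.2.1
    have htT : (t:ℝ) ≤ T := t.2.2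
    have hb2 : ‖∫ σ in (0:ℝ)..(t:ℝ), S σ (Gm M (ext w) ((t:ℝ) - σ))‖
        ≤ C2 * |(t:ℝ) - 0| := by
      apply intervalIntegral.norm_integral_le_of_norm_le_const
      intro σ hσ
      rw [uIoc_of_le ht0] at hσ
      have hσ0 : 0 ≤ σ := hσ.1.le
      have hτ1 : (t:ℝ) - σ ≤ 1 := by linarith [hσ.1, htT, hT1]
      calc ‖S σ (Gm M (ext w) ((t:ℝ) - σ))‖ ≤ ‖Gm M (ext w) ((t:ℝ) - σ)‖ :=
            hSnorm σ hσ0 _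
        _ ≤ Ch * Bf M + Cl * Bg M := hGmbd M _ _ hτ1
        _ = C2 := by simp only [hC2def]
    have hb1 : ‖S ↑t u₀‖ ≤ ‖u₀‖ := hSnorm ↑t ht0 u₀
    calc ‖S ↑t u₀ + ∫ σ in (0:ℝ)..(t:ℝ), S σ (Gm M (ext w) ((t:ℝ) - σ))‖
        ≤ ‖u₀‖ + C2 * |(t:ℝ) - 0| := norm_add_le_of_le hb1 hb2
      _ ≤ M := by
          rw [sub_zero, abs_of_nonneg ht0]
          simp only [hMdef]
          nlinarith [hTC2, hC2nn, mul_le_mul_of_nonneg_left htT hC2nn]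
  have hextwbd : ∀ σ : ℝ, ‖ext w σ‖ ≤ M := by
    intro σ
    simp only [hextdef]
    exact hwbd _
  -- ## a.e. avoidance of the endpoint
  have hae_ne : ∀ c : ℝ, ∀ᵐ σ : ℝ, σ ≠ c := by
    intro c
    rw [MeasureTheory.ae_iff]
    have hset : {σ : ℝ | ¬ σ ≠ c} = {c} := by ext σ; simp
    rw [hset]
    exact Real.volume_singleton
  -- ## master computation
  have master : ∀ m : ℝ, ∀ vv : ℝ → CbN N, Continuous vv →
      (∀ s ∈ Icc (0:ℝ) T, ‖vv s‖ ≤ m) → ∀ t ∈ Ioc (0:ℝ) T, ∀ x : EucN N,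
      (S t u₀ + ∫ σ in (0:ℝ)..t, S σ (Gm m vv (t - σ))) x
        = (∫ y, Γ x y t * u₀ y) +
          ∫ σ in (0:ℝ)..t, ∫ y, Γ x y (t - σ) *
            (h σ * f (vv σ y) + l σ * g (vv σ y)) := by
    intro m vv hvvcont hvvbd t ht x
    rw [BoundedContinuousFunction.add_apply]
    congr 1
    · exact hSΓ u₀ t ht.1 x
    · rw [J_eval S hSdist hK4 (Gm m vv) (hGmcont m vv hvvcont) ht.1.le x]
      apply intervalIntegral.integral_congr_ae
      filter_upwards [hae_ne t] with σ hσne hσmem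
      rw [uIoc_of_le ht.1.le] at hσmem
      have hσ0 : 0 < σ := hσmem.1
      have hσt : σ < t := lt_of_le_of_ne hσmem.2 hσne
      have hts : 0 < t - σ := by linarith
      have hσT : σ ∈ Icc (0:ℝ) T := ⟨hσ0.le, le_trans hσmem.2 ht.2⟩
      rw [hSΓ _ _ hts x]
      have hinner : ∀ y : EucN N, (Gm m vv σ) y
          = h σ * f (vv σ y) + l σ * g (vv σ y) := by
        intro y
        have e1 : (Gm m vv σ) y
            = H σ * (Nf m (vv σ)) y + L σ * (Ng m (vv σ)) y := by
          simp only [hGmdef, BoundedContinuousFunction.add_apply,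
            BoundedContinuousFunction.smul_apply, smul_eq_mul]
        rw [e1, hNf_apply, hNg_apply, hHeq σ hσ0.le, hLeq σ hσ0.le]
        have hb : |vv σ y| ≤ m := by
          have h1 : ‖vv σ y‖ ≤ ‖vv σ‖ := (vv σ).norm_coe_le_norm y
          rw [Real.norm_eq_abs] at h1
          exact le_trans h1 (hvvbd σ hσT)
        rw [truncR_eq m _ hb]
      simp only [hinner]
  -- ## the solution and its mild property
  have hextw0 : ext w 0 = u₀ := by
    have h0mem : (0:ℝ) ∈ Icc (0:ℝ) T := ⟨le_rfl, hT0.le⟩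
    calc ext w 0 = w ⟨0, h0mem⟩ := hextmem w 0 h0mem
      _ = S 0 u₀ + ∫ σ in (0:ℝ)..(0:ℝ), S σ (Gm M (ext w) (0 - σ)) := hwEq ⟨0, h0mem⟩
      _ = u₀ := by rw [hS0, intervalIntegral.integral_same, add_zero]
  have humild : IsMildOnIcc N Γ h l f g u₀ T (ext w) := by
    refine ⟨(hextcont w).continuousOn, hextw0, ?_⟩
    intro t ht x
    have htm : t ∈ Icc (0:ℝ) T := ⟨ht.1.le, ht.2⟩
    have h1 : ext w t = w ⟨t, htm⟩ := hextmem w t htm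
    have h2 : w ⟨t, htm⟩
        = S t u₀ + ∫ σ in (0:ℝ)..t, S σ (Gm M (ext w) (t - σ)) := hwEq ⟨t, htm⟩
    rw [h1, h2]
    exact master M (ext w) (hextcont w) (fun s _ => hextwbd s) t ht x
  refine ⟨T, hT0, ext w, humild, ?_⟩
  -- ## uniqueness
  intro v hv
  obtain ⟨hvcont, hv0, hveq⟩ := hv
  set vE : ℝ → CbN N := fun σ => v ↑(projIcc 0 T hT0.le σ) with hvEdef
  have hvEcont : Continuous vE := by
    have h1 : Continuous (fun s : Icc (0:ℝ) T => v ↑s) :=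
      hvcont.comp_continuous continuous_subtype_val (fun x => x.2)
    exact h1.comp continuous_projIcc
  have hvEeq : ∀ s ∈ Icc (0:ℝ) T, vE s = v s := by
    intro s hs
    simp only [hvEdef, projIcc_of_mem hT0.le hs]
  obtain ⟨Bv, hBv⟩ :=
    (isCompact_Icc (a := (0:ℝ)) (b := T)).exists_bound_of_continuousOn hvcont
  set m' : ℝ := max M Bv with hm'def
  have hMm' : M ≤ m' := le_max_left _ _
  have hvEbd : ∀ s ∈ Icc (0:ℝ) T, ‖vE s‖ ≤ m' := by
    intro s hs
    rw [hvEeq s hs]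
    exact le_trans (hBv s hs) (le_max_right _ _)
  have hwbd' : ∀ s ∈ Icc (0:ℝ) T, ‖ext w s‖ ≤ m' :=
    fun s _ => le_trans (hextwbd s) hMm'
  have hcancel : ∀ (a b c : CbN N), (c + a) - (c + b) = a - b := fun a b c => by abel
  have hvform : ∀ t ∈ Ioc (0:ℝ) T,
      vE t = S t u₀ + ∫ σ in (0:ℝ)..t, S σ (Gm m' vE (t - σ)) := by
    intro t ht
    have htm : t ∈ Icc (0:ℝ) T := ⟨ht.1.le, ht.2⟩
    apply BoundedContinuousFunction.ext
    intro x
    rw [hvEeq t htm, hveq t ht x, master m' vE hvEcont hvEbd t ht x]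
    congr 1
    apply intervalIntegral.integral_congr
    intro σ hσ
    rw [uIcc_of_le ht.1.le] at hσ
    have hσm : σ ∈ Icc (0:ℝ) T := ⟨hσ.1, le_trans hσ.2 ht.2⟩
    simp only [hvEeq σ hσm]
  have huform : ∀ t ∈ Ioc (0:ℝ) T,
      ext w t = S t u₀ + ∫ σ in (0:ℝ)..t, S σ (Gm m' (ext w) (t - σ)) := by
    intro t ht
    apply BoundedContinuousFunction.ext
    intro x
    rw [humild.2.2 t ht x, master m' (ext w) (hextcont w) hwbd' t ht x]
  set e : ℝ → ℝ := fun σ => ‖vE σ - ext w σ‖ with hedef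
  have hecont : Continuous e := (hvEcont.sub (hextcont w)).norm
  have henn : ∀ σ, 0 ≤ e σ := fun σ => norm_nonneg _
  set C' : ℝ := Ch * Kf m' + Cl * Kg m' with hC'def
  have hC'nn : 0 ≤ C' := by
    simp only [hC'def]
    have := mul_nonneg hCh0 (hKf0 m'); have := mul_nonneg hCl0 (hKg0 m'); linarith
  have he0 : e 0 = 0 := by
    have h0mem : (0:ℝ) ∈ Icc (0:ℝ) T := ⟨le_rfl, hT0.le⟩
    simp only [hedef]
    rw [hvEeq 0 h0mem, hv0, hextw0, sub_self, norm_zero]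
  have hgron : ∀ t ∈ Icc (0:ℝ) T, e t ≤ C' * ∫ σ in (0:ℝ)..t, e σ := by
    intro t htm
    rcases eq_or_lt_of_le htm.1 with heq | ht0t
    · rw [← heq, intervalIntegral.integral_same, mul_zero, he0]
    · have ht : t ∈ Ioc (0:ℝ) T := ⟨ht0t, htm.2⟩
      have hJ1 := J_integrand_contOn S hSdist hK4 (Gm m' vE)
        (hGmcont m' vE hvEcont) t le_rfl ht.1.le
      have hJ2 := J_integrand_contOn S hSdist hK4 (Gm m' (ext w))
        (hGmcont m' (ext w) (hextcont w)) t le_rfl ht.1.le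
      have hdiff : vE t - ext w t = ∫ σ in (0:ℝ)..t,
          (S σ (Gm m' vE (t - σ)) - S σ (Gm m' (ext w) (t - σ))) := by
        rw [hvform t ht, huform t ht, hcancel,
          ← intervalIntegral.integral_sub hJ1 hJ2]
      have hint3 : IntervalIntegrable (fun σ => C' * e (t - σ)) volume 0 t :=
        (continuous_const.mul
          (hecont.comp (continuous_const.sub continuous_id))).intervalIntegrable _ _
      have hb : ∀ᵐ σ ∂(volume.restrict (uIoc (0:ℝ) t)),
          ‖S σ (Gm m' vE (t - σ)) - S σ (Gm m' (ext w) (t - σ))‖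
            ≤ C' * e (t - σ) := by
        apply ae_restrict_of_forall_mem measurableSet_uIoc
        intro σ hσ
        rw [uIoc_of_le ht.1.le] at hσ
        have hσ0 : 0 ≤ σ := hσ.1.le
        have hτ1 : t - σ ≤ 1 := by
          have := hσ.1
          have := htm.2
          linarith [hT1]
        calc ‖S σ (Gm m' vE (t - σ)) - S σ (Gm m' (ext w) (t - σ))‖
            ≤ ‖Gm m' vE (t - σ) - Gm m' (ext w) (t - σ)‖ := by
              rw [← dist_eq_norm, ← dist_eq_norm]
              exact hSdist σ hσ0 _ _
          _ ≤ C' * ‖vE (t - σ) - ext w (t - σ)‖ := by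
              simpa only [hC'def] using hGmdiff m' vE (ext w) (t - σ) hτ1
          _ = C' * e (t - σ) := by simp only [hedef]
      have hb' := hb
      rw [uIoc_of_le ht.1.le] at hb'
      have hnb := intervalIntegral.norm_integral_le_of_norm_le ht.1.le
        ((ae_restrict_iff' measurableSet_Ioc).1 hb') hint3
      have hcv : (∫ σ in (0:ℝ)..t, C' * e (t - σ))
          = C' * ∫ σ in (0:ℝ)..t, e σ := by
        have h5 := intervalIntegral.integral_comp_sub_left (a := 0) (b := t)
          (fun σ => C' * e σ) t
        simp only [sub_self, sub_zero] at h5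
        rw [h5]
        exact intervalIntegral.integral_const_mul C' e
      have hnn2 : 0 ≤ C' * ∫ σ in (0:ℝ)..t, e σ :=
        mul_nonneg hC'nn (intervalIntegral.integral_nonneg ht.1.le (fun σ _ => henn σ))
      rw [hcv] at hnb
      calc e t = ‖vE t - ext w t‖ := by simp only [hedef]
        _ = ‖∫ σ in (0:ℝ)..t,
            (S σ (Gm m' vE (t - σ)) - S σ (Gm m' (ext w) (t - σ)))‖ := by rw [hdiff]
        _ ≤ C' * ∫ σ in (0:ℝ)..t, e σ := hnb
  have hzero := gronwall_zero hecont henn hgron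
  intro t htm
  have h6 := hzero t htm
  simp only [hedef] at h6
  have h7 : vE t = ext w t := sub_eq_zero.1 (norm_eq_zero.1 h6)
  rw [← hvEeq t htm, h7]
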